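/- arXiv:2411.00957 — 2 statements merged into one kernel-verified Lean document; each statement's English description precedes it below -/
import Mathlib

section
/- Fix g ≥ 1 and d ≥ 1. The set of 2g×2 integer matrices B satisfying B^T J_{2g} B = d·J_2, modulo the left action of Sp(2g,Z) (by B ↦ MB for M ∈ Sp(2g,Z)) and the right action of SL(2,Z), decomposes into finitely many orbits. -/
open Matrix

/-- Gram matrix of the standard symplectic form on `ℤ^(g ⊕ g)`. -/
def Jmat (g : ℕ) : Matrix (Fin g ⊕ Fin g) (Fin g ⊕ Fin g) ℤ :=
  Matrix.fromBlocks 0 1 (-1) 0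

namespace SympRed

variable {g : ℕ}

lemma jT (g : ℕ) : (Jmat g)ᵀ = -Jmat g := by
  simp [Jmat, Matrix.fromBlocks_transpose, Matrix.fromBlocks_neg]

lemma jrow_l (i : Fin g) : Jmat g (Sum.inl i) = Pi.single (Sum.inr i) (1 : ℤ) := by
  funext j
  cases j with
  | inl j => simp [Jmat, Matrix.fromBlocks, Pi.single_apply]
  | inr j => simp [Jmat, Matrix.fromBlocks, Pi.single_apply, Matrix.one_apply, eq_comm]

lemma jrow_r (i : Fin g) : Jmat g (Sum.inr i) = -Pi.single (Sum.inl i) (1 : ℤ) := by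
  funext j
  cases j with
  | inl j => simp [Jmat, Matrix.fromBlocks, Pi.single_apply, Matrix.one_apply, eq_comm]
  | inr j => simp [Jmat, Matrix.fromBlocks, Pi.single_apply]

lemma hJv (v : Fin g ⊕ Fin g → ℤ) : Jmat g *ᵥ v = -(v ᵥ* Jmat g) := by
  rw [← Matrix.vecMul_transpose, jT, Matrix.vecMul_neg]

lemma hself (v : Fin g ⊕ Fin g → ℤ) : (v ᵥ* Jmat g) ⬝ᵥ v = 0 := by
  have h1 : v ⬝ᵥ (Jmat g *ᵥ v) = (v ᵥ* Jmat g) ⬝ᵥ v := Matrix.dotProduct_mulVec v _ v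
  rw [hJv, dotProduct_neg] at h1
  have h2 := dotProduct_comm v (v ᵥ* Jmat g)
  linarith

lemma hpair (v w : Fin g ⊕ Fin g → ℤ) : (v ᵥ* Jmat g) ⬝ᵥ w = -((w ᵥ* Jmat g) ⬝ᵥ v) := by
  have h1 : v ⬝ᵥ (Jmat g *ᵥ w) = (v ᵥ* Jmat g) ⬝ᵥ w := Matrix.dotProduct_mulVec v _ w
  rw [hJv, dotProduct_neg] at h1
  have h2 := dotProduct_comm v (w ᵥ* Jmat g)
  linarith

section vmv
set_option linter.unusedSectionVars false
variable {m n p : Type*} [Fintype m] [Fintype n] [Fintype p]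

lemma vmv_mul (a : m → ℤ) (r : n → ℤ) (B : Matrix n p ℤ) :
    vecMulVec a r * B = vecMulVec a (r ᵥ* B) := by
  ext i j
  simp [Matrix.mul_apply, vecMulVec_apply, Matrix.vecMul, dotProduct,
    Finset.mul_sum, mul_assoc]

lemma mul_vmv (A : Matrix m n ℤ) (a : n → ℤ) (r : p → ℤ) :
    A * vecMulVec a r = vecMulVec (A *ᵥ a) r := by
  ext i j
  simp [Matrix.mul_apply, vecMulVec_apply, Matrix.mulVec, dotProduct,
    Finset.sum_mul, mul_assoc]

lemma vmv_vmv (a : m → ℤ) (b : n → ℤ) (x : n → ℤ) (y : p → ℤ) :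
    vecMulVec a b * vecMulVec x y = (b ⬝ᵥ x) • vecMulVec a y := by
  ext i j
  simp [Matrix.mul_apply, vecMulVec_apply, dotProduct, Finset.sum_mul, Finset.mul_sum]
  apply Finset.sum_congr rfl
  intros; ring

lemma vmv_T (a : m → ℤ) (b : n → ℤ) : (vecMulVec a b)ᵀ = vecMulVec b a := by
  ext i j; simp [vecMulVec_apply, mul_comm]

lemma vmv_neg_left (a : m → ℤ) (b : n → ℤ) : vecMulVec (-a) b = -vecMulVec a b := by
  ext i j; simp [vecMulVec_apply]

lemma expand4 [DecidableEq m] (J A B : Matrix m m ℤ) (c : ℤ) :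
    (1 + c • A) * J * (1 + c • B)
      = J + c • (A * J) + c • (J * B) + (c * c) • (A * J * B) := by
  simp only [Matrix.add_mul, Matrix.mul_add, Matrix.mul_smul, Matrix.smul_mul,
    Matrix.mul_one, Matrix.one_mul, smul_add, smul_smul, Matrix.mul_assoc]
  abel

end vmv

/-- single symplectic transvection -/
lemma symp1 (v : Fin g ⊕ Fin g → ℤ) (c : ℤ) :
    (1 + c • vecMulVec v (v ᵥ* Jmat g))ᵀ * Jmat g * (1 + c • vecMulVec v (v ᵥ* Jmat g))
      = Jmat g := by
  set r := v ᵥ* Jmat g with hr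
  have hT : (1 + c • vecMulVec v r)ᵀ = 1 + c • vecMulVec r v := by
    rw [Matrix.transpose_add, Matrix.transpose_one, Matrix.transpose_smul, vmv_T]
  rw [hT, expand4]
  have h1 : vecMulVec r v * Jmat g = vecMulVec r r := by rw [vmv_mul, ← hr]
  have h2 : Jmat g * vecMulVec v r = -vecMulVec r r := by
    rw [mul_vmv, hJv v, ← hr, vmv_neg_left]
  have h3 : vecMulVec r r * vecMulVec v r = 0 := by
    rw [vmv_vmv, hself v, zero_smul]
  rw [h1, h2, h3, smul_zero, smul_neg]
  abel

/-- double (Eichler) transvection; needs the two vectors to pair to zero -/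
lemma symp2 (v w : Fin g ⊕ Fin g → ℤ) (c : ℤ) (h : (v ᵥ* Jmat g) ⬝ᵥ w = 0) :
    (1 + c • (vecMulVec v (w ᵥ* Jmat g) + vecMulVec w (v ᵥ* Jmat g)))ᵀ * Jmat g *
      (1 + c • (vecMulVec v (w ᵥ* Jmat g) + vecMulVec w (v ᵥ* Jmat g))) = Jmat g := by
  set rv := v ᵥ* Jmat g with hrv
  set rw := w ᵥ* Jmat g with hrw
  have h' : rw ⬝ᵥ v = 0 := by rw [hrw, hpair w v, ← hrv, h, neg_zero]
  have hT : (1 + c • (vecMulVec v rw + vecMulVec w rv))ᵀ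
      = 1 + c • (vecMulVec rw v + vecMulVec rv w) := by
    rw [Matrix.transpose_add, Matrix.transpose_one, Matrix.transpose_smul,
      Matrix.transpose_add, vmv_T, vmv_T]
  rw [hT, expand4]
  have hQJ : (vecMulVec rw v + vecMulVec rv w) * Jmat g
      = vecMulVec rw rv + vecMulVec rv rw := by
    rw [Matrix.add_mul, vmv_mul, vmv_mul, ← hrv, ← hrw]
  have hJP : Jmat g * (vecMulVec v rw + vecMulVec w rv)
      = -(vecMulVec rw rv + vecMulVec rv rw) := by
    rw [Matrix.mul_add, mul_vmv, mul_vmv, hJv v, hJv w, ← hrv, ← hrw,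
      vmv_neg_left, vmv_neg_left]
    abel
  have hPP : (vecMulVec rw rv + vecMulVec rv rw) *
      (vecMulVec v rw + vecMulVec w rv) = 0 := by
    rw [Matrix.add_mul, Matrix.mul_add, Matrix.mul_add, vmv_vmv, vmv_vmv, vmv_vmv,
      vmv_vmv, hself v, hself w, h, h', zero_smul, zero_smul, zero_smul, zero_smul]
    abel
  rw [hQJ, hJP, hPP, smul_zero, smul_neg]
  abel

end SympRed

namespace Part2
open SympRed Sum

variable {g : ℕ}

abbrev K2 := Fin 1 ⊕ Fin 1

def SRel (g : ℕ) (B B' : Matrix (Fin g ⊕ Fin g) K2 ℤ) : Prop :=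
  ∃ M, Mᵀ * Jmat g * M = Jmat g ∧ B' = M * B

lemma SRel.rfl (B : Matrix (Fin g ⊕ Fin g) K2 ℤ) : SRel g B B := by
  refine ⟨1, ?_, by rw [Matrix.one_mul]⟩
  rw [Matrix.transpose_one, Matrix.one_mul, Matrix.mul_one]

lemma SRel.trans {B B' B'' : Matrix (Fin g ⊕ Fin g) K2 ℤ} (h : SRel g B B')
    (h' : SRel g B' B'') : SRel g B B'' := by
  obtain ⟨M1, hs1, rfl⟩ := h
  obtain ⟨M2, hs2, rfl⟩ := h'
  refine ⟨M2 * M1, ?_, by simp [Matrix.mul_assoc]⟩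
  calc (M2 * M1)ᵀ * Jmat g * (M2 * M1) = M1ᵀ * (M2ᵀ * Jmat g * M2) * M1 := by
        rw [Matrix.transpose_mul]; simp only [Matrix.mul_assoc]
    _ = Jmat g := by rw [hs2, hs1]

lemma SRel.gram {B B' : Matrix (Fin g ⊕ Fin g) K2 ℤ} (h : SRel g B B') (d : ℤ)
    (hg : Bᵀ * Jmat g * B = d • Jmat 1) : B'ᵀ * Jmat g * B' = d • Jmat 1 := by
  obtain ⟨M, hs, rfl⟩ := h
  calc (M * B)ᵀ * Jmat g * (M * B) = Bᵀ * (Mᵀ * Jmat g * M) * B := by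
        rw [Matrix.transpose_mul]; simp only [Matrix.mul_assoc]
    _ = d • Jmat 1 := by rw [hs]; exact hg

lemma vmv_neg_right {m n : Type*} (a : m → ℤ) (b : n → ℤ) :
    vecMulVec a (-b) = -vecMulVec a b := by
  ext i j; simp [vecMulVec_apply]

lemma upd1 (B : Matrix (Fin g ⊕ Fin g) K2 ℤ) (a : Fin g ⊕ Fin g) (u : K2 → ℤ) (c : ℤ) :
    B + c • vecMulVec (Pi.single a 1) u = B.updateRow a (B a + c • u) := by
  ext i j
  by_cases h : i = a
  · subst h; simp [vecMulVec_apply]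
  · simp [vecMulVec_apply, Matrix.updateRow_ne h, Pi.single_apply, h]

lemma upd2 (B : Matrix (Fin g ⊕ Fin g) K2 ℤ) (a b : Fin g ⊕ Fin g) (hab : a ≠ b)
    (u u' : K2 → ℤ) (c c' : ℤ) :
    B + (c • vecMulVec (Pi.single a 1) u + c' • vecMulVec (Pi.single b 1) u')
      = (B.updateRow a (B a + c • u)).updateRow b (B b + c' • u') := by
  ext i j
  by_cases h : i = b
  · subst h
    simp [vecMulVec_apply, Pi.single_apply, hab.symm, Ne.symm hab]
  · by_cases h2 : i = a
    · subst h2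
      simp [vecMulVec_apply, Pi.single_apply, Matrix.updateRow_ne h, hab, Ne.symm hab]
    · simp [vecMulVec_apply, Pi.single_apply, Matrix.updateRow_ne h, Matrix.updateRow_ne h2,
        h, h2]

lemma rel_op1 (k : Fin g) (c : ℤ) (B : Matrix (Fin g ⊕ Fin g) K2 ℤ) :
    SRel g B (B.updateRow (inl k) (B (inl k) + c • B (inr k))) := by
  have hrow : (Pi.single (inl k) (1:ℤ) ᵥ* Jmat g) ᵥ* B = B (inr k) := by
    rw [Matrix.single_one_vecMul, Matrix.row, jrow_l, Matrix.single_one_vecMul, Matrix.row]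
  refine ⟨_, symp1 (Pi.single (inl k) 1) c, ?_⟩
  rw [Matrix.add_mul, Matrix.one_mul, Matrix.smul_mul, vmv_mul, hrow, upd1]

lemma rel_op1' (k : Fin g) (c : ℤ) (B : Matrix (Fin g ⊕ Fin g) K2 ℤ) :
    SRel g B (B.updateRow (inr k) (B (inr k) + c • B (inl k))) := by
  have hrow : (Pi.single (inr k) (1:ℤ) ᵥ* Jmat g) ᵥ* B = -(B (inl k)) := by
    rw [Matrix.single_one_vecMul, Matrix.row, jrow_r, Matrix.neg_vecMul, Matrix.single_one_vecMul, Matrix.row]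
  refine ⟨_, symp1 (Pi.single (inr k) 1) (-c), ?_⟩
  rw [Matrix.add_mul, Matrix.one_mul, Matrix.smul_mul, vmv_mul, hrow, vmv_neg_right,
    smul_neg, neg_smul, neg_neg, upd1]

lemma rel_op2a (i k : Fin g) (h : i ≠ k) (c : ℤ) (B : Matrix (Fin g ⊕ Fin g) K2 ℤ) :
    SRel g B ((B.updateRow (inl i) (B (inl i) + c • B (inr k))).updateRow (inl k)
      (B (inl k) + c • B (inr i))) := by
  have hcond : (Pi.single (inl i) (1:ℤ) ᵥ* Jmat g) ⬝ᵥ Pi.single (inl k) (1:ℤ) = 0 := by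
    rw [Matrix.single_one_vecMul, Matrix.row, jrow_l]
    simp [dotProduct_single, Pi.single_apply]
  have hrow1 : (Pi.single (inl k) (1:ℤ) ᵥ* Jmat g) ᵥ* B = B (inr k) := by
    rw [Matrix.single_one_vecMul, Matrix.row, jrow_l, Matrix.single_one_vecMul, Matrix.row]
  have hrow2 : (Pi.single (inl i) (1:ℤ) ᵥ* Jmat g) ᵥ* B = B (inr i) := by
    rw [Matrix.single_one_vecMul, Matrix.row, jrow_l, Matrix.single_one_vecMul, Matrix.row]
  refine ⟨_, symp2 (Pi.single (inl i) 1) (Pi.single (inl k) 1) c hcond, ?_⟩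
  rw [Matrix.add_mul, Matrix.one_mul, Matrix.smul_mul, Matrix.add_mul, vmv_mul, vmv_mul,
    hrow1, hrow2, smul_add]
  exact (upd2 B (inl i) (inl k) (by simpa using h) _ _ c c).symm

lemma rel_op2b (i k : Fin g) (h : i ≠ k) (c : ℤ) (B : Matrix (Fin g ⊕ Fin g) K2 ℤ) :
    SRel g B ((B.updateRow (inl i) (B (inl i) + c • B (inl k))).updateRow (inr k)
      (B (inr k) + (-c) • B (inr i))) := by
  have hcond : (Pi.single (inl i) (1:ℤ) ᵥ* Jmat g) ⬝ᵥ Pi.single (inr k) (1:ℤ) = 0 := by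
    rw [Matrix.single_one_vecMul, Matrix.row, jrow_l]
    simp [dotProduct_single, Pi.single_apply, h]
  have hrow1 : (Pi.single (inr k) (1:ℤ) ᵥ* Jmat g) ᵥ* B = -(B (inl k)) := by
    rw [Matrix.single_one_vecMul, Matrix.row, jrow_r, Matrix.neg_vecMul, Matrix.single_one_vecMul, Matrix.row]
  have hrow2 : (Pi.single (inl i) (1:ℤ) ᵥ* Jmat g) ᵥ* B = B (inr i) := by
    rw [Matrix.single_one_vecMul, Matrix.row, jrow_l, Matrix.single_one_vecMul, Matrix.row]
  refine ⟨_, symp2 (Pi.single (inl i) 1) (Pi.single (inr k) 1) (-c) hcond, ?_⟩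
  rw [Matrix.add_mul, Matrix.one_mul, Matrix.smul_mul, Matrix.add_mul, vmv_mul, vmv_mul,
    hrow1, hrow2, vmv_neg_right, smul_add, smul_neg, ← neg_smul, neg_neg]
  exact (upd2 B (inl i) (inr k) (by simp) _ _ c (-c)).symm

end Part2

namespace Part3
open SympRed Part2 Sum

/-- reachability on a pair of integer slots via elementary column/row additions -/
inductive TwoReach : ℤ × ℤ → ℤ × ℤ → Prop
  | refl (p : ℤ × ℤ) : TwoReach p p
  | fst (t : ℤ) {a b : ℤ} {p : ℤ × ℤ} : TwoReach (a + t * b, b) p → TwoReach (a, b) p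
  | snd (t : ℤ) {a b : ℤ} {p : ℤ × ℤ} : TwoReach (a, b + t * a) p → TwoReach (a, b) p

lemma tr_base (a : ℤ) : TwoReach (a, 0) ((a.natAbs : ℤ), 0) := by
  rcases le_or_gt 0 a with h | h
  · have : ((a.natAbs : ℤ)) = a := Int.natAbs_of_nonneg h
    rw [this]; exact TwoReach.refl _
  · have h1 : ((a.natAbs : ℤ)) = -a := by omega
    refine TwoReach.snd 1 ?_
    have e1 : (0 : ℤ) + 1 * a = a := by ring
    rw [e1]
    refine TwoReach.fst (-2) ?_
    have e2 : a + (-2) * a = -a := by ring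
    rw [e2]
    refine TwoReach.snd 1 ?_
    have e3 : a + 1 * (-a) = 0 := by ring
    rw [e3, h1]
    exact TwoReach.refl _

lemma euclid (a b : ℤ) : ∃ c : ℤ, 0 ≤ c ∧ TwoReach (a, b) (c, 0) := by
  by_cases hb : b = 0
  · subst hb; exact ⟨_, Int.natCast_nonneg _, tr_base a⟩
  · -- strong induction on natAbs b
    clear hb
    generalize hn : b.natAbs = n
    induction n using Nat.strong_induction_on generalizing a b with
    | _ n ih =>
      by_cases hb : b = 0
      · subst hb; exact ⟨_, Int.natCast_nonneg _, tr_base a⟩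
      set r := a % b with hr
      have hstep1 : a + (-(a / b)) * b = r := by rw [hr, Int.emod_def]; ring
      have hr0 : 0 ≤ r := Int.emod_nonneg a hb
      have hrb : r < |b| := Int.emod_lt_abs a hb
      by_cases hrz : r = 0
      · -- (0, b) → (b, b) → (b, 0) → (|b|, 0)
        refine ⟨_, Int.natCast_nonneg b.natAbs, ?_⟩
        refine TwoReach.fst (-(a / b)) ?_
        rw [hstep1, hrz]
        refine TwoReach.fst 1 ?_
        have e1 : (0 : ℤ) + 1 * b = b := by ring
        rw [e1]
        refine TwoReach.snd (-1) ?_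
        have e2 : b + (-1) * b = 0 := by ring
        rw [e2]
        exact tr_base b
      · -- second step: (r, b) → (r, b % r), recurse
        have hstep2 : b + (-(b / r)) * r = b % r := by rw [Int.emod_def]; ring
        have hlt : (b % r).natAbs < n := by
          have h1 : 0 ≤ b % r := Int.emod_nonneg b hrz
          have h2 : b % r < |r| := Int.emod_lt_abs b hrz
          rw [Int.abs_eq_natAbs] at h2 hrb
          omega
        obtain ⟨c, hc0, hc⟩ := ih _ hlt r (b % r) rfl
        refine ⟨c, hc0, TwoReach.fst (-(a / b)) ?_⟩
        rw [hstep1]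
        refine TwoReach.snd (-(b / r)) ?_
        rw [hstep2]
        exact hc

end Part3

namespace Part3
open SympRed Part2 Sum

variable {g : ℕ}

lemma transfer_plane (k : Fin g) {p q : ℤ × ℤ} (h : TwoReach p q) :
    ∀ B : Matrix (Fin g ⊕ Fin g) K2 ℤ, B (inl k) (inl 0) = p.1 → B (inr k) (inl 0) = p.2 →
    ∃ B', SRel g B B' ∧ B' (inl k) (inl 0) = q.1 ∧ B' (inr k) (inl 0) = q.2 ∧
      ∀ a, a ≠ inl k → a ≠ inr k → B' a (inl 0) = B a (inl 0) := by
  induction h with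
  | refl p =>
    intro B h1 h2
    exact ⟨B, SRel.rfl B, h1, h2, fun _ _ _ => rfl⟩
  | fst t h ih =>
    intro B h1 h2
    set B1 := B.updateRow (inl k) (B (inl k) + t • B (inr k)) with hB1
    have e1 : B1 (inl k) (inl 0) = B (inl k) (inl 0) + t * B (inr k) (inl 0) := by
      rw [hB1, Matrix.updateRow_self]; simp
    have e2 : B1 (inr k) (inl 0) = B (inr k) (inl 0) := by
      rw [hB1, Matrix.updateRow_ne (by simp)]
    obtain ⟨B', hrel, g1, g2, g3⟩ := ih B1 (by rw [e1, h1, h2]) (by rw [e2, h2])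
    refine ⟨B', (rel_op1 k t B).trans hrel, g1, g2, fun a ha1 ha2 => ?_⟩
    rw [g3 a ha1 ha2, hB1, Matrix.updateRow_ne ha1]
  | snd t h ih =>
    intro B h1 h2
    set B1 := B.updateRow (inr k) (B (inr k) + t • B (inl k)) with hB1
    have e1 : B1 (inl k) (inl 0) = B (inl k) (inl 0) := by
      rw [hB1, Matrix.updateRow_ne (by simp)]
    have e2 : B1 (inr k) (inl 0) = B (inr k) (inl 0) + t * B (inl k) (inl 0) := by
      rw [hB1, Matrix.updateRow_self]; simp
    obtain ⟨B', hrel, g1, g2, g3⟩ := ih B1 (by rw [e1, h1]) (by rw [e2, h1, h2])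
    refine ⟨B', (rel_op1' k t B).trans hrel, g1, g2, fun a ha1 ha2 => ?_⟩
    rw [g3 a ha1 ha2, hB1, Matrix.updateRow_ne ha2]

lemma transfer_cross (i k : Fin g) (hik : i ≠ k) {p q : ℤ × ℤ} (h : TwoReach p q) :
    ∀ B : Matrix (Fin g ⊕ Fin g) K2 ℤ, B (inl i) (inl 0) = p.1 → B (inl k) (inl 0) = p.2 →
      B (inr i) (inl 0) = 0 → B (inr k) (inl 0) = 0 →
    ∃ B', SRel g B B' ∧ B' (inl i) (inl 0) = q.1 ∧ B' (inl k) (inl 0) = q.2 ∧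
      B' (inr i) (inl 0) = 0 ∧ B' (inr k) (inl 0) = 0 ∧
      ∀ a, a ≠ inl i → a ≠ inl k → a ≠ inr i → a ≠ inr k →
        B' a (inl 0) = B a (inl 0) := by
  induction h with
  | refl p =>
    intro B h1 h2 h3 h4
    exact ⟨B, SRel.rfl B, h1, h2, h3, h4, fun _ _ _ _ _ => rfl⟩
  | fst t h ih =>
    intro B h1 h2 h3 h4
    set B1 := (B.updateRow (inl i) (B (inl i) + t • B (inl k))).updateRow (inr k)
      (B (inr k) + (-t) • B (inr i)) with hB1
    have e1 : B1 (inl i) (inl 0) = B (inl i) (inl 0) + t * B (inl k) (inl 0) := by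
      rw [hB1, Matrix.updateRow_ne (by simp), Matrix.updateRow_self]; simp
    have e2 : B1 (inl k) (inl 0) = B (inl k) (inl 0) := by
      rw [hB1, Matrix.updateRow_ne (by simp),
        Matrix.updateRow_ne (by simp [(Ne.symm hik)])]
    have e3 : B1 (inr i) (inl 0) = B (inr i) (inl 0) := by
      rw [hB1, Matrix.updateRow_ne (by simp [hik]), Matrix.updateRow_ne (by simp)]
    have e4 : B1 (inr k) (inl 0) = B (inr k) (inl 0) + (-t) * B (inr i) (inl 0) := by
      rw [hB1, Matrix.updateRow_self]; simp
    obtain ⟨B', hrel, g1, g2, g3, g4, g5⟩ := ih B1 (by rw [e1, h1, h2])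
      (by rw [e2, h2]) (by rw [e3, h3]) (by rw [e4, h4, h3]; ring)
    refine ⟨B', (rel_op2b i k hik t B).trans hrel, g1, g2, g3, g4,
      fun a ha1 ha2 ha3 ha4 => ?_⟩
    rw [g5 a ha1 ha2 ha3 ha4, hB1, Matrix.updateRow_ne ha4, Matrix.updateRow_ne ha1]
  | snd t h ih =>
    intro B h1 h2 h3 h4
    set B1 := (B.updateRow (inl k) (B (inl k) + t • B (inl i))).updateRow (inr i)
      (B (inr i) + (-t) • B (inr k)) with hB1
    have e1 : B1 (inl i) (inl 0) = B (inl i) (inl 0) := by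
      rw [hB1, Matrix.updateRow_ne (by simp), Matrix.updateRow_ne (by simp [hik])]
    have e2 : B1 (inl k) (inl 0) = B (inl k) (inl 0) + t * B (inl i) (inl 0) := by
      rw [hB1, Matrix.updateRow_ne (by simp), Matrix.updateRow_self]; simp
    have e3 : B1 (inr i) (inl 0) = B (inr i) (inl 0) + (-t) * B (inr k) (inl 0) := by
      rw [hB1, Matrix.updateRow_self]; simp
    have e4 : B1 (inr k) (inl 0) = B (inr k) (inl 0) := by
      rw [hB1, Matrix.updateRow_ne (by simp [(Ne.symm hik)]), Matrix.updateRow_ne (by simp)]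
    obtain ⟨B', hrel, g1, g2, g3, g4, g5⟩ := ih B1 (by rw [e1, h1])
      (by rw [e2, h2, h1]) (by rw [e3, h3, h4]; ring) (by rw [e4, h4])
    refine ⟨B', (rel_op2b k i (Ne.symm hik) t B).trans hrel, g1, g2, g3, g4,
      fun a ha1 ha2 ha3 ha4 => ?_⟩
    rw [g5 a ha1 ha2 ha3 ha4, hB1, Matrix.updateRow_ne ha3, Matrix.updateRow_ne ha2]

end Part3

namespace Part4
open SympRed Part2 Part3 Sum Finset

variable {g : ℕ}

lemma stageA (B : Matrix (Fin g ⊕ Fin g) K2 ℤ) :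
    ∃ B', SRel g B B' ∧ ∀ k, B' (inr k) (inl 0) = 0 := by
  suffices H : ∀ n (B : Matrix (Fin g ⊕ Fin g) K2 ℤ),
      (Finset.univ.filter fun k => B (inr k) (inl 0) ≠ 0).card ≤ n →
      ∃ B', SRel g B B' ∧ ∀ k, B' (inr k) (inl 0) = 0 by
    exact H _ B le_rfl
  intro n
  induction n with
  | zero =>
    intro B hB
    refine ⟨B, SRel.rfl B, fun k => ?_⟩
    by_contra hk
    have : k ∈ Finset.univ.filter fun k => B (inr k) (inl 0) ≠ 0 :=
      Finset.mem_filter.mpr ⟨Finset.mem_univ _, hk⟩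
    have := Finset.card_eq_zero.mp (Nat.le_zero.mp hB)
    simp [this] at *
  | succ n ih =>
    intro B hB
    by_cases hE : ∀ k, B (inr k) (inl 0) = 0
    · exact ⟨B, SRel.rfl B, hE⟩
    push_neg at hE
    obtain ⟨k, hk⟩ := hE
    obtain ⟨c, hc0, htr⟩ := euclid (B (inl k) (inl 0)) (B (inr k) (inl 0))
    obtain ⟨B1, hrel, g1, g2, g3⟩ := transfer_plane k htr B rfl rfl
    have hkmem : k ∈ Finset.univ.filter fun k => B (inr k) (inl 0) ≠ 0 :=
      Finset.mem_filter.mpr ⟨Finset.mem_univ _, hk⟩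
    have hsub : (Finset.univ.filter fun j => B1 (inr j) (inl 0) ≠ 0) ⊆
        (Finset.univ.filter fun j => B (inr j) (inl 0) ≠ 0).erase k := by
      intro j hj
      have hj' := (Finset.mem_filter.mp hj).2
      have hjk : j ≠ k := by rintro rfl; exact hj' g2
      refine Finset.mem_erase.mpr ⟨hjk, Finset.mem_filter.mpr ⟨Finset.mem_univ _, ?_⟩⟩
      rwa [g3 (inr j) (by simp) (by simp [hjk])] at hj'
    have hcard : (Finset.univ.filter fun j => B1 (inr j) (inl 0) ≠ 0).card ≤ n := by
      have h1 := Finset.card_le_card hsub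
      rw [Finset.card_erase_of_mem hkmem] at h1
      omega
    obtain ⟨B', hrel', hz⟩ := ih B1 hcard
    exact ⟨B', hrel.trans hrel', hz⟩

lemma stageB (i0 : Fin g) (B : Matrix (Fin g ⊕ Fin g) K2 ℤ)
    (hy : ∀ k, B (inr k) (inl 0) = 0) :
    ∃ B' c, SRel g B B' ∧ 0 ≤ c ∧ (∀ a, B' a (inl 0) = if a = inl i0 then c else 0) := by
  suffices H : ∀ n (B : Matrix (Fin g ⊕ Fin g) K2 ℤ),
      (Finset.univ.filter fun k => k ≠ i0 ∧ B (inl k) (inl 0) ≠ 0).card ≤ n →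
      (∀ k, B (inr k) (inl 0) = 0) →
      ∃ B' c, SRel g B B' ∧ 0 ≤ c ∧ (∀ a, B' a (inl 0) = if a = inl i0 then c else 0) by
    exact H _ B le_rfl hy
  intro n
  induction n with
  | zero =>
    intro B hB hy
    have hempty := Finset.card_eq_zero.mp (Nat.le_zero.mp hB)
    have hx : ∀ k, k ≠ i0 → B (inl k) (inl 0) = 0 := by
      intro k hki
      by_contra hk
      have : k ∈ Finset.univ.filter fun k => k ≠ i0 ∧ B (inl k) (inl 0) ≠ 0 :=
        Finset.mem_filter.mpr ⟨Finset.mem_univ _, hki, hk⟩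
      simp [hempty] at this
    obtain ⟨c, hc0, htr⟩ := euclid (B (inl i0) (inl 0)) (B (inr i0) (inl 0))
    obtain ⟨B1, hrel, g1, g2, g3⟩ := transfer_plane i0 htr B rfl rfl
    refine ⟨B1, c, hrel, hc0, fun a => ?_⟩
    rcases a with k | k
    · by_cases hk : k = i0
      · subst hk; simpa using g1
      · rw [if_neg (by simp [hk]), g3 (inl k) (by simp [hk]) (by simp)]
        exact hx k hk
    · rw [if_neg (by simp)]
      by_cases hk : k = i0
      · subst hk; exact g2
      · rw [g3 (inr k) (by simp) (by simp [hk])]; exact hy k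
  | succ n ih =>
    intro B hB hy
    by_cases hE : ∀ k, k ≠ i0 → B (inl k) (inl 0) = 0
    · -- bad set is empty; use the zero-step argument via ih at 0? simpler: redo
      have : (Finset.univ.filter fun k => k ≠ i0 ∧ B (inl k) (inl 0) ≠ 0).card ≤ 0 := by
        have : (Finset.univ.filter fun k => k ≠ i0 ∧ B (inl k) (inl 0) ≠ 0) = ∅ := by
          apply Finset.eq_empty_iff_forall_notMem.mpr
          intro k hk
          have := (Finset.mem_filter.mp hk).2
          exact this.2 (hE k this.1)
        simp [this]
      -- reuse zero case by strong recursion: just inline a recursive call with n := 0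
      -- easiest: apply ih after noting card ≤ n since = 0
      exact ih B (by omega) hy
    push_neg at hE
    obtain ⟨k, hki, hk⟩ := hE
    obtain ⟨c, hc0, htr⟩ := euclid (B (inl i0) (inl 0)) (B (inl k) (inl 0))
    obtain ⟨B1, hrel, g1, g2, g3, g4, g5⟩ :=
      transfer_cross i0 k (Ne.symm hki) htr B rfl rfl (hy i0) (hy k)
    have hy1 : ∀ j, B1 (inr j) (inl 0) = 0 := by
      intro j
      by_cases hj1 : j = i0
      · subst hj1; exact g3
      by_cases hj2 : j = k
      · subst hj2; exact g4
      rw [g5 (inr j) (by simp) (by simp) (by simp [hj1]) (by simp [hj2])]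
      exact hy j
    have hkmem : k ∈ Finset.univ.filter fun j => j ≠ i0 ∧ B (inl j) (inl 0) ≠ 0 :=
      Finset.mem_filter.mpr ⟨Finset.mem_univ _, hki, hk⟩
    have hsub : (Finset.univ.filter fun j => j ≠ i0 ∧ B1 (inl j) (inl 0) ≠ 0) ⊆
        (Finset.univ.filter fun j => j ≠ i0 ∧ B (inl j) (inl 0) ≠ 0).erase k := by
      intro j hj
      obtain ⟨-, hji, hjx⟩ := Finset.mem_filter.mp hj
      have hjk : j ≠ k := by rintro rfl; exact hjx g2
      refine Finset.mem_erase.mpr ⟨hjk, Finset.mem_filter.mpr ⟨Finset.mem_univ _, hji, ?_⟩⟩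
      rwa [g5 (inl j) (by simp [hji]) (by simp [hjk]) (by simp) (by simp)] at hjx
    have hcard : (Finset.univ.filter fun j => j ≠ i0 ∧ B1 (inl j) (inl 0) ≠ 0).card ≤ n := by
      have h1 := Finset.card_le_card hsub
      rw [Finset.card_erase_of_mem hkmem] at h1
      omega
    obtain ⟨B', c', hrel', hc0', hpat⟩ := ih B1 hcard hy1
    exact ⟨B', c', hrel.trans hrel', hc0', hpat⟩

end Part4

namespace Part5
open SympRed Part2 Part3 Sum Finset

variable {g : ℕ}

lemma phase3 (i0 : Fin g) (c e : ℤ) (he : 0 < e) (B : Matrix (Fin g ⊕ Fin g) K2 ℤ)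
    (hpat : ∀ a, B a (inl 0) = if a = inl i0 then c else 0)
    (hee : B (inr i0) (inr 0) = e) :
    ∃ B', SRel g B B' ∧ (∀ a, B' a (inl 0) = if a = inl i0 then c else 0) ∧
      B' (inr i0) (inr 0) = e ∧
      (∀ a, a ≠ inr i0 → 0 ≤ B' a (inr 0) ∧ B' a (inr 0) < e) := by
  suffices H : ∀ n (B : Matrix (Fin g ⊕ Fin g) K2 ℤ),
      (Finset.univ.filter (fun a => a ≠ inl i0 ∧ a ≠ inr i0 ∧
        ¬(0 ≤ B a (inr 0) ∧ B a (inr 0) < e))).card ≤ n →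
      (∀ a, B a (inl 0) = if a = inl i0 then c else 0) →
      B (inr i0) (inr 0) = e →
      ∃ B', SRel g B B' ∧ (∀ a, B' a (inl 0) = if a = inl i0 then c else 0) ∧
        B' (inr i0) (inr 0) = e ∧
        (∀ a, a ≠ inr i0 → 0 ≤ B' a (inr 0) ∧ B' a (inr 0) < e) by
    exact H _ B le_rfl hpat hee
  intro n
  induction n with
  | zero =>
    intro B hB hpat hee
    have hempty := Finset.card_eq_zero.mp (Nat.le_zero.mp hB)
    have hgood : ∀ a, a ≠ inl i0 → a ≠ inr i0 →
        0 ≤ B a (inr 0) ∧ B a (inr 0) < e := by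
      intro a h1 h2
      by_contra hk
      have : a ∈ Finset.univ.filter (fun a => a ≠ inl i0 ∧ a ≠ inr i0 ∧
          ¬(0 ≤ B a (inr 0) ∧ B a (inr 0) < e)) :=
        Finset.mem_filter.mpr ⟨Finset.mem_univ _, h1, h2, hk⟩
      rw [hempty] at this
      exact absurd this (Finset.notMem_empty a)
    -- final step: fix slot (inl i0) in column 1
    set t := -(B (inl i0) (inr 0) / e) with ht
    set B1 := B.updateRow (inl i0) (B (inl i0) + t • B (inr i0)) with hB1
    refine ⟨B1, rel_op1 i0 t B, ?_, ?_, ?_⟩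
    · intro a
      by_cases ha : a = inl i0
      · subst ha
        rw [hB1, Matrix.updateRow_self]
        have h0 : B (inr i0) (inl 0) = 0 := by rw [hpat]; simp
        simp [h0, hpat]
      · rw [hB1, Matrix.updateRow_ne ha, hpat]
    · rw [hB1, Matrix.updateRow_ne (by simp), hee]
    · intro a ha
      by_cases h1 : a = inl i0
      · subst h1
        rw [hB1, Matrix.updateRow_self]
        have : B (inl i0) (inr 0) + t * B (inr i0) (inr 0) = B (inl i0) (inr 0) % e := by
          rw [hee, ht, Int.emod_def]; ring
        simp only [Pi.add_apply, Pi.smul_apply, smul_eq_mul]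
        rw [this]
        exact ⟨Int.emod_nonneg _ (ne_of_gt he), by
          have := Int.emod_lt_abs (B (inl i0) (inr 0)) (ne_of_gt he)
          rwa [abs_of_pos he] at this⟩
      · rw [hB1, Matrix.updateRow_ne h1]
        exact hgood a h1 ha
  | succ n ih =>
    intro B hB hpat hee
    by_cases hE : ∀ a, a ≠ inl i0 → a ≠ inr i0 → 0 ≤ B a (inr 0) ∧ B a (inr 0) < e
    · have hzero : (Finset.univ.filter (fun a => a ≠ inl i0 ∧ a ≠ inr i0 ∧
          ¬(0 ≤ B a (inr 0) ∧ B a (inr 0) < e))).card = 0 := by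
        rw [Finset.card_eq_zero]
        apply Finset.eq_empty_iff_forall_notMem.mpr
        intro a ha
        obtain ⟨-, h1, h2, h3⟩ := Finset.mem_filter.mp ha
        exact h3 (hE a h1 h2)
      exact ih B (by omega) hpat hee
    push_neg at hE
    obtain ⟨a, ha1, ha2, ha3i⟩ := hE
    have ha3 : ¬(0 ≤ B a (inr 0) ∧ B a (inr 0) < e) :=
      fun h => absurd h.2 (not_lt.mpr (ha3i h.1))
    clear ha3i
    have hxz : ∀ k : Fin g, k ≠ i0 → B (inl k) (inl 0) = 0 := by
      intro k hk; rw [hpat]; simp [hk]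
    have hyz : ∀ k : Fin g, B (inr k) (inl 0) = 0 := by
      intro k; rw [hpat]; simp
    rcases a with k | k
    · -- slot (inl k), k ≠ i0 : use rel_op2a i0 k
      have hk : k ≠ i0 := fun h => ha1 (by rw [h])
      set t := -(B (inl k) (inr 0) / e) with ht
      set B1 := (B.updateRow (inl i0) (B (inl i0) + t • B (inr k))).updateRow (inl k)
        (B (inl k) + t • B (inr i0)) with hB1
      have hrel1 : SRel g B B1 := rel_op2a i0 k (Ne.symm hk) t B
      have e_i0 : B1 (inl i0) (inl 0) = c := by
        rw [hB1, Matrix.updateRow_ne (by simp [Ne.symm hk]), Matrix.updateRow_self]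
        simp only [Pi.add_apply, Pi.smul_apply, smul_eq_mul]
        rw [hyz k, hpat]; simp
      have e_k1 : B1 (inl k) (inr 0) = B (inl k) (inr 0) % e := by
        rw [hB1, Matrix.updateRow_self]
        simp only [Pi.add_apply, Pi.smul_apply, smul_eq_mul]
        rw [hee, ht, Int.emod_def]; ring
      have e_k0 : B1 (inl k) (inl 0) = 0 := by
        rw [hB1, Matrix.updateRow_self]
        simp only [Pi.add_apply, Pi.smul_apply, smul_eq_mul]
        rw [hyz i0, hxz k hk]; ring
      have e_other : ∀ x, x ≠ inl i0 → x ≠ inl k → ∀ j, B1 x j = B x j := by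
        intro x h1 h2 j
        rw [hB1, Matrix.updateRow_ne h2, Matrix.updateRow_ne h1]
      have hpat1 : ∀ x, B1 x (inl 0) = if x = inl i0 then c else 0 := by
        intro x
        by_cases h1 : x = inl i0
        · subst h1; rw [e_i0, if_pos rfl]
        by_cases h2 : x = inl k
        · subst h2; rw [e_k0, if_neg h1]
        · rw [e_other x h1 h2, hpat, if_neg h1]
      have hee1 : B1 (inr i0) (inr 0) = e := by
        rw [e_other (inr i0) (by simp) (by simp), hee]
      have hamem : (inl k : Fin g ⊕ Fin g) ∈ Finset.univ.filter (fun a => a ≠ inl i0 ∧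
          a ≠ inr i0 ∧ ¬(0 ≤ B a (inr 0) ∧ B a (inr 0) < e)) :=
        Finset.mem_filter.mpr ⟨Finset.mem_univ _, ha1, ha2, ha3⟩
      have hsub : (Finset.univ.filter (fun x => x ≠ inl i0 ∧ x ≠ inr i0 ∧
          ¬(0 ≤ B1 x (inr 0) ∧ B1 x (inr 0) < e))) ⊆
          (Finset.univ.filter (fun a => a ≠ inl i0 ∧ a ≠ inr i0 ∧
          ¬(0 ≤ B a (inr 0) ∧ B a (inr 0) < e))).erase (inl k) := by
        intro x hx
        obtain ⟨-, h1, h2, h3⟩ := Finset.mem_filter.mp hx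
        have hxk : x ≠ inl k := by
          rintro rfl
          apply h3
          rw [e_k1]
          exact ⟨Int.emod_nonneg _ (ne_of_gt he), by
            have := Int.emod_lt_abs (B (inl k) (inr 0)) (ne_of_gt he)
            rwa [abs_of_pos he] at this⟩
        refine Finset.mem_erase.mpr ⟨hxk, Finset.mem_filter.mpr
          ⟨Finset.mem_univ _, h1, h2, ?_⟩⟩
        rwa [e_other x h1 hxk] at h3
      have hcard : (Finset.univ.filter (fun x => x ≠ inl i0 ∧ x ≠ inr i0 ∧
          ¬(0 ≤ B1 x (inr 0) ∧ B1 x (inr 0) < e))).card ≤ n := by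
        have h1 := Finset.card_le_card hsub
        rw [Finset.card_erase_of_mem hamem] at h1
        omega
      obtain ⟨B', hrel', q1, q2, q3⟩ := ih B1 hcard hpat1 hee1
      exact ⟨B', hrel1.trans hrel', q1, q2, q3⟩
    · -- slot (inr k), k ≠ i0 : use rel_op2b i0 k
      have hk : k ≠ i0 := fun h => ha2 (by rw [h])
      set t := B (inr k) (inr 0) / e with ht
      set B1 := (B.updateRow (inl i0) (B (inl i0) + t • B (inl k))).updateRow (inr k)
        (B (inr k) + (-t) • B (inr i0)) with hB1
      have hrel1 : SRel g B B1 := rel_op2b i0 k (Ne.symm hk) t B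
      have e_i0 : B1 (inl i0) (inl 0) = c := by
        rw [hB1, Matrix.updateRow_ne (by simp), Matrix.updateRow_self]
        simp only [Pi.add_apply, Pi.smul_apply, smul_eq_mul]
        rw [hxz k hk, hpat]; simp
      have e_k1 : B1 (inr k) (inr 0) = B (inr k) (inr 0) % e := by
        rw [hB1, Matrix.updateRow_self]
        simp only [Pi.add_apply, Pi.smul_apply, smul_eq_mul]
        rw [hee, ht, Int.emod_def]; ring
      have e_k0 : B1 (inr k) (inl 0) = 0 := by
        rw [hB1, Matrix.updateRow_self]
        simp only [Pi.add_apply, Pi.smul_apply, smul_eq_mul]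
        rw [hyz i0, hyz k]; ring
      have e_other : ∀ x, x ≠ inl i0 → x ≠ inr k → ∀ j, B1 x j = B x j := by
        intro x h1 h2 j
        rw [hB1, Matrix.updateRow_ne h2, Matrix.updateRow_ne h1]
      have hpat1 : ∀ x, B1 x (inl 0) = if x = inl i0 then c else 0 := by
        intro x
        by_cases h1 : x = inl i0
        · subst h1; rw [e_i0, if_pos rfl]
        by_cases h2 : x = inr k
        · subst h2; rw [e_k0, if_neg h1]
        · rw [e_other x h1 h2, hpat, if_neg h1]
      have hee1 : B1 (inr i0) (inr 0) = e := by
        rw [e_other (inr i0) (by simp) (by simp [Ne.symm hk]), hee]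
      have hamem : (inr k : Fin g ⊕ Fin g) ∈ Finset.univ.filter (fun a => a ≠ inl i0 ∧
          a ≠ inr i0 ∧ ¬(0 ≤ B a (inr 0) ∧ B a (inr 0) < e)) :=
        Finset.mem_filter.mpr ⟨Finset.mem_univ _, ha1, ha2, ha3⟩
      have hsub : (Finset.univ.filter (fun x => x ≠ inl i0 ∧ x ≠ inr i0 ∧
          ¬(0 ≤ B1 x (inr 0) ∧ B1 x (inr 0) < e))) ⊆
          (Finset.univ.filter (fun a => a ≠ inl i0 ∧ a ≠ inr i0 ∧
          ¬(0 ≤ B a (inr 0) ∧ B a (inr 0) < e))).erase (inr k) := by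
        intro x hx
        obtain ⟨-, h1, h2, h3⟩ := Finset.mem_filter.mp hx
        have hxk : x ≠ inr k := by
          rintro rfl
          apply h3
          rw [e_k1]
          exact ⟨Int.emod_nonneg _ (ne_of_gt he), by
            have := Int.emod_lt_abs (B (inr k) (inr 0)) (ne_of_gt he)
            rwa [abs_of_pos he] at this⟩
        refine Finset.mem_erase.mpr ⟨hxk, Finset.mem_filter.mpr
          ⟨Finset.mem_univ _, h1, h2, ?_⟩⟩
        rwa [e_other x h1 hxk] at h3
      have hcard : (Finset.univ.filter (fun x => x ≠ inl i0 ∧ x ≠ inr i0 ∧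
          ¬(0 ≤ B1 x (inr 0) ∧ B1 x (inr 0) < e))).card ≤ n := by
        have h1 := Finset.card_le_card hsub
        rw [Finset.card_erase_of_mem hamem] at h1
        omega
      obtain ⟨B', hrel', q1, q2, q3⟩ := ih B1 hcard hpat1 hee1
      exact ⟨B', hrel1.trans hrel', q1, q2, q3⟩

end Part5

namespace Part6
open SympRed Part2 Part3 Part4 Part5 Sum

variable {g : ℕ}

lemma reduce (d : ℤ) (hd : 1 ≤ d) (i0 : Fin g) (B : Matrix (Fin g ⊕ Fin g) K2 ℤ)
    (hGram : Bᵀ * Jmat g * B = d • Jmat 1) :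
    ∃ B', SRel g B B' ∧ ∀ i j, 0 ≤ B' i j ∧ B' i j ≤ d := by
  obtain ⟨B1, r1, hy⟩ := stageA B
  obtain ⟨B2, c, r2, hc0, hpat⟩ := stageB i0 B1 hy
  have hrel : SRel g B B2 := r1.trans r2
  have hg2 : B2ᵀ * Jmat g * B2 = d • Jmat 1 := hrel.gram d hGram
  set e := B2 (inr i0) (inr 0) with hedef
  have key : c * e = d := by
    have h1 : (B2ᵀ * Jmat g * B2) (inl 0) (inr 0) = (d • Jmat 1) (inl 0) (inr 0) := by
      rw [hg2]
    have h2 : (d • Jmat 1) (inl 0) (inr 0) = d := by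
      simp [Jmat, Matrix.fromBlocks]
    have h3 : (Jmat g * B2) (inl i0) (inr 0) = e := by
      rw [Matrix.mul_apply, jrow_l]
      rw [Finset.sum_eq_single (inr i0)]
      · simp [hedef]
      · intro b _ hb; simp [Pi.single_apply, hb]
      · intro h; exact absurd (Finset.mem_univ _) h
    have h4 : (B2ᵀ * Jmat g * B2) (inl 0) (inr 0) = c * e := by
      rw [Matrix.mul_assoc, Matrix.mul_apply]
      rw [Finset.sum_eq_single (inl i0)]
      · rw [Matrix.transpose_apply, hpat, if_pos rfl, h3]
      · intro b _ hb
        rw [Matrix.transpose_apply, hpat, if_neg hb, zero_mul]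
      · intro h; exact absurd (Finset.mem_univ _) h
    rw [h4, h2] at h1
    exact h1
  have hcpos : 0 < c := by
    rcases lt_or_eq_of_le hc0 with h | h
    · exact h
    · exfalso; rw [← h, zero_mul] at key; omega
  have hepos : 0 < e := by nlinarith
  have hcd : c ≤ d := by nlinarith
  have hed : e ≤ d := by nlinarith
  obtain ⟨B3, r3, pat3, hee3, hbnd⟩ := phase3 i0 c e hepos B2 hpat rfl
  refine ⟨B3, hrel.trans r3, fun i j => ?_⟩
  rcases j with x | x
  · have hx : x = 0 := Fin.eq_zero x
    subst hx
    rw [pat3 i]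
    by_cases hi : i = inl i0 <;> simp [hi] <;> omega
  · have hx : x = 0 := Fin.eq_zero x
    subst hx
    by_cases hi : i = inr i0
    · subst hi; rw [hee3]; omega
    · have := hbnd i hi; omega

end Part6


/-- For fixed `g ≥ 1` and `d ≥ 1`, the set of `2g×2` integer matrices `B` with
`Bᵀ J_{2g} B = d·J₂`, modulo the left action of `Sp(2g,ℤ)` and the right action of
`SL(2,ℤ)`, consists of finitely many orbits. -/
theorem stmt6 (g : ℕ) (hg : 1 ≤ g) (d : ℤ) (hd : 1 ≤ d) :
    Finite (Quot (fun (B B' : {B : Matrix (Fin g ⊕ Fin g) (Fin 1 ⊕ Fin 1) ℤ //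
        Bᵀ * Jmat g * B = d • Jmat 1}) =>
      ∃ (M : Matrix (Fin g ⊕ Fin g) (Fin g ⊕ Fin g) ℤ)
        (A : Matrix (Fin 1 ⊕ Fin 1) (Fin 1 ⊕ Fin 1) ℤ),
        Mᵀ * Jmat g * M = Jmat g ∧ Aᵀ * Jmat 1 * A = Jmat 1 ∧
        (B' : Matrix (Fin g ⊕ Fin g) (Fin 1 ⊕ Fin 1) ℤ) = M * (B : Matrix (Fin g ⊕ Fin g) (Fin 1 ⊕ Fin 1) ℤ) * A)) := by
  classical
  let S := {p : {B : Matrix (Fin g ⊕ Fin g) (Fin 1 ⊕ Fin 1) ℤ //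
      Bᵀ * Jmat g * B = d • Jmat 1} // ∀ i j, 0 ≤ p.1 i j ∧ p.1 i j ≤ d}
  have hSfin : Finite S := by
    let φ : S → ((Fin g ⊕ Fin g) → (Fin 1 ⊕ Fin 1) → (Finset.Icc (0:ℤ) d)) :=
      fun p i j => ⟨p.1.1 i j, Finset.mem_Icc.mpr ⟨(p.2 i j).1, (p.2 i j).2⟩⟩
    have hφ : Function.Injective φ := by
      intro p q hpq
      apply Subtype.ext; apply Subtype.ext
      ext i j
      have := congrFun (congrFun hpq i) j
      exact congrArg Subtype.val this
    exact Finite.of_injective φ hφ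
  apply @Finite.of_surjective _ _ hSfin (fun p => Quot.mk _ p.1)
  intro q
  induction q using Quot.ind with
  | _ a =>
    obtain ⟨B, hGram⟩ := a
    obtain ⟨B', hrel, hbnd⟩ := Part6.reduce d hd ⟨0, hg⟩ B hGram
    have hGram' : B'ᵀ * Jmat g * B' = d • Jmat 1 := hrel.gram d hGram
    obtain ⟨M, hM, hMB⟩ := hrel
    have hrab : ∃ (M : Matrix (Fin g ⊕ Fin g) (Fin g ⊕ Fin g) ℤ)
        (A : Matrix (Fin 1 ⊕ Fin 1) (Fin 1 ⊕ Fin 1) ℤ),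
        Mᵀ * Jmat g * M = Jmat g ∧ Aᵀ * Jmat 1 * A = Jmat 1 ∧
        B' = M * B * A := by
      refine ⟨M, 1, hM, ?_, ?_⟩
      · rw [Matrix.transpose_one, Matrix.one_mul, Matrix.mul_one]
      · rw [Matrix.mul_one]; exact hMB
    exact ⟨⟨⟨B', hGram'⟩, hbnd⟩, (Quot.sound hrab).symm⟩
end

section
/- Let N ≥ 1, p a prime dividing N, and let φ_{N,p} ∈ S(M₂(Q_p)) be the indicator function of {[[a,b],[c,d]] : a,b,d ∈ Z_p, c ∈ N Z_p}. Define M[φ](g) = |det g|^{-1} ∫_{Q_p²} φ(g^{-1}[[x,y],[0,0]]) dx dy for g ∈ GL₂(Q_p). Then M[φ_{N,p} − p^{-1} φ_{N/p,p}] evaluated at [[1,0],[p^i,1]] equals 1 − p^{-1} if i ≥ ord_p(N) and equals 0 if 0 ≤ i < ord_p(N). -/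
open MeasureTheory

section aux

variable (p : ℕ) [Fact p.Prime]

lemma padic_norm_natCast (M : ℕ) (hM : 0 < M) :
    ‖(M : ℚ_[p])‖ = (p:ℝ) ^ (-(padicValNat p M : ℤ)) := by
  have h1 : ((M : ℚ) : ℚ_[p]) = (M : ℚ_[p]) := by push_cast; ring
  rw [← h1, Padic.eq_padicNorm,
    padicNorm.eq_zpow_of_nonzero (by exact_mod_cast hM.ne'),
    padicValRat.of_nat]
  push_cast
  ring

lemma ball_decomp (k : ℕ) :
    {x : ℚ_[p] | ‖x‖ ≤ (p:ℝ) ^ (-(k:ℤ))} =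
      ⋃ r ∈ Finset.range p,
        (fun x : ℚ_[p] => x - (r:ℚ_[p]) * (p:ℚ_[p]) ^ k) ⁻¹'
          {x : ℚ_[p] | ‖x‖ ≤ (p:ℝ) ^ (-((k:ℤ)+1))} := by
  have hp0 : (0:ℝ) < p := by exact_mod_cast (Fact.out : p.Prime).pos
  have hpk : ((p:ℚ_[p]) ^ k) ≠ 0 := by
    apply pow_ne_zero
    exact_mod_cast Nat.cast_ne_zero.mpr (Fact.out : p.Prime).ne_zero
  ext x
  simp only [Set.mem_setOf_eq, Set.mem_iUnion, Set.mem_preimage, Finset.mem_range]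
  constructor
  · intro hx
    set u : ℚ_[p] := x / (p:ℚ_[p]) ^ k with hu_def
    have hxu : x = u * (p:ℚ_[p]) ^ k := by rw [hu_def, div_mul_cancel₀ _ hpk]
    have hu : ‖u‖ ≤ 1 := by
      rw [hu_def, norm_div, Padic.norm_p_pow]
      rw [div_le_one (by positivity)]
      simpa using hx
    set z : ℤ_[p] := ⟨u, hu⟩ with hz_def
    refine ⟨z.appr 1, by simpa using z.appr_lt 1, ?_⟩
    have hspec : ‖z - (z.appr 1 : ℤ_[p])‖ ≤ (p:ℝ) ^ (-(1:ℤ)) :=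
      (PadicInt.norm_le_pow_iff_mem_span_pow _ 1).mpr (z.appr_spec 1)
    have hcoe : ‖u - ((z.appr 1 : ℕ) : ℚ_[p])‖ ≤ (p:ℝ) ^ (-(1:ℤ)) := by
      have : ((z - (z.appr 1 : ℤ_[p]) : ℤ_[p]) : ℚ_[p]) = u - ((z.appr 1 : ℕ) : ℚ_[p]) := by
        push_cast [hz_def]
        rfl
      calc ‖u - ((z.appr 1 : ℕ) : ℚ_[p])‖ = ‖((z - (z.appr 1 : ℤ_[p]) : ℤ_[p]) : ℚ_[p])‖ := by
            rw [this]
        _ ≤ (p:ℝ) ^ (-(1:ℤ)) := hspec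
    have : x - ((z.appr 1 : ℕ) : ℚ_[p]) * (p:ℚ_[p]) ^ k
        = (u - ((z.appr 1 : ℕ) : ℚ_[p])) * (p:ℚ_[p]) ^ k := by
      rw [hxu]; ring
    rw [this, norm_mul, Padic.norm_p_pow]
    calc ‖u - ((z.appr 1 : ℕ) : ℚ_[p])‖ * (p:ℝ) ^ (-(k:ℤ))
        ≤ (p:ℝ) ^ (-(1:ℤ)) * (p:ℝ) ^ (-(k:ℤ)) := by
          apply mul_le_mul_of_nonneg_right hcoe (by positivity)
      _ = (p:ℝ) ^ (-((k:ℤ)+1)) := by rw [← zpow_add₀ hp0.ne']; ring_nf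
  · rintro ⟨r, hr, hx⟩
    have hxr : ‖x - (r:ℚ_[p]) * (p:ℚ_[p]) ^ k‖ ≤ (p:ℝ) ^ (-(k:ℤ)) := by
      refine hx.trans ?_
      apply zpow_le_zpow_right₀ (by exact_mod_cast (Fact.out : p.Prime).one_lt.le) (by omega)
    have hrp : ‖(r:ℚ_[p]) * (p:ℚ_[p]) ^ k‖ ≤ (p:ℝ) ^ (-(k:ℤ)) := by
      rw [norm_mul, Padic.norm_p_pow]
      have : ‖(r:ℚ_[p])‖ ≤ 1 := by
        have := Padic.norm_int_le_one (p := p) (r : ℤ)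
        simpa using this
      nlinarith [zpow_pos hp0 (-(k:ℤ))]
    calc ‖x‖ = ‖(x - (r:ℚ_[p]) * (p:ℚ_[p]) ^ k) + (r:ℚ_[p]) * (p:ℚ_[p]) ^ k‖ := by ring_nf
      _ ≤ max ‖x - (r:ℚ_[p]) * (p:ℚ_[p]) ^ k‖ ‖(r:ℚ_[p]) * (p:ℚ_[p]) ^ k‖ :=
          Padic.nonarchimedean _ _
      _ ≤ (p:ℝ) ^ (-(k:ℤ)) := max_le hxr hrp

variable [MeasurableSpace ℚ_[p]] [BorelSpace ℚ_[p]]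

lemma ball_measurable (c : ℝ) : MeasurableSet {x : ℚ_[p] | ‖x‖ ≤ c} := by
  have : {x : ℚ_[p] | ‖x‖ ≤ c} = Metric.closedBall 0 c := by
    ext x; simp [Metric.mem_closedBall, dist_eq_norm]
  rw [this]; exact measurableSet_closedBall

lemma ball_measure (μ : Measure ℚ_[p]) [μ.IsAddHaarMeasure]
    (hball : μ {x : ℚ_[p] | ‖x‖ ≤ 1} = 1) (k : ℕ) :
    μ {x : ℚ_[p] | ‖x‖ ≤ (p:ℝ) ^ (-(k:ℤ))} = ((p:ENNReal))⁻¹ ^ k := by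
  have hp0 : (0:ℝ) < p := by exact_mod_cast (Fact.out : p.Prime).pos
  have hpE : (p:ENNReal) ≠ 0 := by exact_mod_cast (Fact.out : p.Prime).ne_zero
  have hpT : (p:ENNReal) ≠ ⊤ := ENNReal.natCast_ne_top p
  induction k with
  | zero => simpa using hball
  | succ k ih =>
    have hstep : μ {x : ℚ_[p] | ‖x‖ ≤ (p:ℝ) ^ (-(k:ℤ))}
        = p * μ {x : ℚ_[p] | ‖x‖ ≤ (p:ℝ) ^ (-((k:ℕ)+1:ℤ))} := by
      have htrans : ∀ (c : ℚ_[p]) (A : Set ℚ_[p]), μ ((fun x => x - c) ⁻¹' A) = μ A := by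
        intro c A
        have hfun : (fun x : ℚ_[p] => x - c) = (fun x => -c + x) := by funext x; ring
        rw [hfun, measure_preimage_add]
      rw [ball_decomp p k]
      rw [measure_biUnion_finset ?_ ?_]
      · simp only [htrans]
        simp [Finset.sum_const, Finset.card_range, mul_comm]
      · -- pairwise disjoint
        intro r hr s hs hrs
        simp only [Finset.coe_range, Set.mem_Iio] at hr hs
        simp only [Function.onFun]
        rw [Set.disjoint_left]
        intro x hx1 hx2
        simp only [Set.mem_preimage, Set.mem_setOf_eq] at hx1 hx2
        have hdiff : ‖((s:ℚ_[p]) - (r:ℚ_[p])) * (p:ℚ_[p]) ^ k‖ ≤ (p:ℝ) ^ (-((k:ℤ)+1)) := by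
          have : ((s:ℚ_[p]) - (r:ℚ_[p])) * (p:ℚ_[p]) ^ k
              = (x - (r:ℚ_[p]) * (p:ℚ_[p]) ^ k) - (x - (s:ℚ_[p]) * (p:ℚ_[p]) ^ k) := by ring
          rw [this]
          calc ‖(x - (r:ℚ_[p]) * (p:ℚ_[p]) ^ k) - (x - (s:ℚ_[p]) * (p:ℚ_[p]) ^ k)‖
              = ‖(x - (r:ℚ_[p]) * (p:ℚ_[p]) ^ k) + (-(x - (s:ℚ_[p]) * (p:ℚ_[p]) ^ k))‖ := by
                rw [sub_eq_add_neg]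
            _ ≤ max ‖x - (r:ℚ_[p]) * (p:ℚ_[p]) ^ k‖ ‖-(x - (s:ℚ_[p]) * (p:ℚ_[p]) ^ k)‖ :=
                Padic.nonarchimedean _ _
            _ = max ‖x - (r:ℚ_[p]) * (p:ℚ_[p]) ^ k‖ ‖x - (s:ℚ_[p]) * (p:ℚ_[p]) ^ k‖ := by
                rw [norm_neg]
            _ ≤ (p:ℝ) ^ (-((k:ℤ)+1)) := max_le hx1 hx2
        have hnorm1 : ‖((s:ℚ_[p]) - (r:ℚ_[p]))‖ = 1 := by
          have hne : ((s:ℤ) - (r:ℤ)) ≠ 0 := by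
            intro h
            apply hrs
            omega
          have hnd : ¬ ((p:ℤ) ∣ ((s:ℤ) - (r:ℤ))) := by
            intro hd
            have h3 : (p:ℤ) ≤ |(s:ℤ) - (r:ℤ)| :=
              Int.le_of_dvd (abs_pos.mpr hne) ((dvd_abs _ _).mpr hd)
            rcases abs_cases ((s:ℤ) - (r:ℤ)) with ⟨h4, _⟩ | ⟨h4, _⟩ <;> omega
          have hle : ‖(((s:ℤ) - (r:ℤ) : ℤ) : ℚ_[p])‖ ≤ 1 := Padic.norm_int_le_one _
          have hlt : ¬ ‖(((s:ℤ) - (r:ℤ) : ℤ) : ℚ_[p])‖ < 1 := by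
            rw [Padic.norm_intCast_lt_one_iff]
            exact hnd
          have heq : (((s:ℤ) - (r:ℤ) : ℤ) : ℚ_[p]) = (s:ℚ_[p]) - (r:ℚ_[p]) := by push_cast; ring
          rw [← heq]
          linarith [lt_or_eq_of_le hle]
        rw [norm_mul, hnorm1, one_mul, Padic.norm_p_pow] at hdiff
        have : (p:ℝ) ^ (-((k:ℤ)+1)) < (p:ℝ) ^ (-(k:ℤ)) := by
          apply zpow_lt_zpow_right₀ (by exact_mod_cast (Fact.out : p.Prime).one_lt)
          omega
        linarith
      · intro r hr
        exact (ball_measurable p _).preimage (measurable_sub_const _)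
    rw [hstep] at ih
    have hset : {x : ℚ_[p] | ‖x‖ ≤ (p:ℝ) ^ (-((k+1:ℕ):ℤ))}
        = {x : ℚ_[p] | ‖x‖ ≤ (p:ℝ) ^ (-((k:ℤ)+1))} := by
      have : (-((k+1:ℕ):ℤ)) = -((k:ℤ)+1) := by push_cast; ring
      rw [this]
    have hmm : μ {x : ℚ_[p] | ‖x‖ ≤ (p:ℝ) ^ (-((k:ℤ)+1))}
        = (p:ENNReal)⁻¹ * ((p:ENNReal) * μ {x : ℚ_[p] | ‖x‖ ≤ (p:ℝ) ^ (-((k:ℤ)+1))}) := by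
      rw [← mul_assoc, ENNReal.inv_mul_cancel hpE hpT, one_mul]
    rw [hset, hmm, ih, pow_succ, mul_comm]

end aux

/-- Let `p | N`, `φ_{N,p}` the indicator of `{[[a,b],[c,d]] : a,b,d ∈ ℤ_p, c ∈ Nℤ_p}`,
and `M[φ](g) = |det g|⁻¹ ∫_{ℚ_p²} φ(g⁻¹[[x,y],[0,0]]) dx dy`.  For
`g = [[1,0],[pⁱ,1]]` one has `g⁻¹[[x,y],[0,0]] = [[x,y],[−pⁱx,−pⁱy]]` and `|det g| = 1`,
so `M[φ_{N,p}](g)` is the Haar volume of the corresponding set; then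
`M[φ_{N,p} − p⁻¹ φ_{N/p,p}](g) = 1 − p⁻¹` if `i ≥ ord_p(N)` and `= 0` if
`0 ≤ i < ord_p(N)`. -/
theorem stmt18 (p : ℕ) [Fact p.Prime] (N : ℕ) (hN : 0 < N) (hpN : p ∣ N) (i : ℕ)
    [MeasurableSpace ℚ_[p]] [BorelSpace ℚ_[p]]
    (μ : Measure ℚ_[p]) [μ.IsAddHaarMeasure]
    (hball : μ {x : ℚ_[p] | ‖x‖ ≤ 1} = 1)
    (S : ℕ → Set (ℚ_[p] × ℚ_[p]))
    (hS : ∀ M : ℕ, S M = {q : ℚ_[p] × ℚ_[p] |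
        ‖q.1‖ ≤ 1 ∧ ‖q.2‖ ≤ 1 ∧
        ‖-((p : ℚ_[p]) ^ i * q.1)‖ ≤ ‖(M : ℚ_[p])‖ ∧ ‖-((p : ℚ_[p]) ^ i * q.2)‖ ≤ 1}) :
    ((μ.prod μ) (S N)).toReal - (p : ℝ)⁻¹ * ((μ.prod μ) (S (N / p))).toReal =
      if padicValNat p N ≤ i then 1 - (p : ℝ)⁻¹ else 0 := by
  have hp1 : (1:ℝ) < p := by exact_mod_cast (Fact.out : p.Prime).one_lt
  have hp0 : (0:ℝ) < p := by linarith
  -- key: S M = ball (v-i) ×ˢ ball 0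
  have key : ∀ M : ℕ, 0 < M →
      S M = {x : ℚ_[p] | ‖x‖ ≤ (p:ℝ) ^ (-((padicValNat p M - i : ℕ):ℤ))} ×ˢ
            {y : ℚ_[p] | ‖y‖ ≤ (p:ℝ) ^ (-((0:ℕ):ℤ))} := by
    intro M hM
    rw [hS M]
    ext ⟨x, y⟩
    set v := padicValNat p M with hv
    simp only [Set.mem_setOf_eq, Set.mem_prod, norm_neg, norm_mul, Padic.norm_p_pow,
      padic_norm_natCast p M hM, Nat.cast_zero, neg_zero, zpow_zero]
    constructor
    · rintro ⟨hx1, hy1, hx2, -⟩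
      refine ⟨?_, hy1⟩
      rcases le_or_gt v i with h | h
      · have : (v - i : ℕ) = 0 := by omega
        rw [this]; simpa using hx1
      · have : ((v - i : ℕ) : ℤ) = (v:ℤ) - i := by omega
        rw [this]
        have hik : (p:ℝ) ^ (-(v:ℤ)) = (p:ℝ) ^ (-(i:ℤ)) * (p:ℝ) ^ (-((v:ℤ) - i)) := by
          rw [← zpow_add₀ hp0.ne']; ring_nf
        rw [hik] at hx2
        have hpos : (0:ℝ) < (p:ℝ) ^ (-(i:ℤ)) := by positivity
        exact (mul_le_mul_iff_right₀ hpos).mp hx2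
    · rintro ⟨hx, hy1⟩
      have hx1 : ‖x‖ ≤ 1 := by
        refine hx.trans ?_
        calc (p:ℝ) ^ (-((v - i : ℕ):ℤ)) ≤ (p:ℝ) ^ (0:ℤ) :=
              zpow_le_zpow_right₀ hp1.le (by omega)
          _ = 1 := zpow_zero _
      refine ⟨hx1, hy1, ?_, ?_⟩
      · rcases le_or_gt v i with h | h
        · calc (p:ℝ)^(-(i:ℤ)) * ‖x‖ ≤ (p:ℝ)^(-(i:ℤ)) * 1 := by
                apply mul_le_mul_of_nonneg_left hx1 (by positivity)
            _ = (p:ℝ)^(-(i:ℤ)) := mul_one _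
            _ ≤ (p:ℝ)^(-(v:ℤ)) := zpow_le_zpow_right₀ hp1.le (by omega)
        · have : ((v - i : ℕ) : ℤ) = (v:ℤ) - i := by omega
          rw [this] at hx
          calc (p:ℝ)^(-(i:ℤ)) * ‖x‖ ≤ (p:ℝ)^(-(i:ℤ)) * (p:ℝ)^(-((v:ℤ)-i)) := by
                apply mul_le_mul_of_nonneg_left hx (by positivity)
            _ = (p:ℝ)^(-(v:ℤ)) := by rw [← zpow_add₀ hp0.ne']; ring_nf
      · have h1 : (p:ℝ)^(-(i:ℤ)) ≤ 1 := by
          calc (p:ℝ)^(-(i:ℤ)) ≤ (p:ℝ)^(0:ℤ) := zpow_le_zpow_right₀ hp1.le (by omega)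
            _ = 1 := zpow_zero _
        calc (p:ℝ)^(-(i:ℤ)) * ‖y‖ ≤ 1 * 1 := mul_le_mul h1 hy1 (norm_nonneg _) zero_le_one
          _ = 1 := one_mul 1
  -- measures
  have hmeas : ∀ M : ℕ, 0 < M →
      ((μ.prod μ) (S M)).toReal = ((p:ℝ)⁻¹) ^ (padicValNat p M - i) := by
    intro M hM
    rw [key M hM, Measure.prod_prod, ball_measure p μ hball, ball_measure p μ hball]
    simp [ENNReal.toReal_pow, ENNReal.toReal_inv]
  have hNp : 0 < N / p := Nat.div_pos (Nat.le_of_dvd hN hpN) (Fact.out : p.Prime).pos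
  have hv' : padicValNat p (N / p) = padicValNat p N - 1 := padicValNat.div hpN
  have hv1 : 1 ≤ padicValNat p N := one_le_padicValNat_of_dvd hN.ne' hpN
  rw [hmeas N hN, hmeas _ hNp, hv']
  rcases le_or_gt (padicValNat p N) i with h | h
  · rw [if_pos h]
    have h1 : padicValNat p N - i = 0 := by omega
    have h2 : padicValNat p N - 1 - i = 0 := by omega
    rw [h1, h2]; simp
  · rw [if_neg (by omega)]
    have h1 : padicValNat p N - i = (padicValNat p N - 1 - i) + 1 := by omega
    rw [h1, pow_succ]
    ring
end
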